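/- Let X be a real random variable with E[e^{tX}] < ∞ for all t ≥ 0, and suppose the function t ↦ log E[e^{√t · X}] is concave on [0,∞) and E[X] = 0. Then for all t ≥ 0, E[e^{tX}] ≤ e^{t² E[X²]/2}. -/

import Mathlib

set_option maxHeartbeats 1000000


open MeasureTheory Real Set Filter

private lemma sq_le_four_exp' {x : ℝ} (hx : 0 ≤ x) : x ^ 2 ≤ 4 * Real.exp x := by
  have h := Real.add_one_le_exp (x / 2)
  have h2 : Real.exp (x / 2) * Real.exp (x / 2) = Real.exp x := by
    rw [← Real.exp_add]; ring_nf
  nlinarith [Real.exp_pos (x / 2)]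

private lemma exp_sub_one_sub_nonneg (y : ℝ) : 0 ≤ Real.exp y - 1 - y := by
  have := Real.add_one_le_exp y; linarith

private lemma exp_taylor2 {y : ℝ} (hy : |y| ≤ 1) :
    |Real.exp y - 1 - y - y ^ 2 / 2| ≤ |y| ^ 3 := by
  have h := Real.exp_bound hy (n := 3) (by norm_num)
  have hs : ∑ m ∈ Finset.range 3, y ^ m / m.factorial = 1 + y + y ^ 2 / 2 := by
    norm_num [Finset.sum_range_succ]
  rw [hs] at h
  have h3 : (0:ℝ) ≤ |y| ^ 3 := by positivity
  calc |Real.exp y - 1 - y - y ^ 2 / 2| = |Real.exp y - (1 + y + y ^ 2 / 2)| := by ring_nf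
    _ ≤ |y| ^ 3 * ((3:ℕ).succ / ((3:ℕ).factorial * 3)) := h
    _ ≤ |y| ^ 3 := by
        have he : ((3:ℕ).succ : ℝ) / ((3:ℕ).factorial * 3) = 2 / 9 := by
          norm_num [Nat.factorial]
        rw [he]
        nlinarith [h3]

private lemma F_dom_bound {u x : ℝ} (hu0 : 0 < u) (hu1 : u ≤ 1) :
    |(Real.exp (u * x) - 1 - u * x) / u ^ 2| ≤ 4 * x ^ 2 + 4 * Real.exp (2 * x) := by
  have hnn := exp_sub_one_sub_nonneg (u * x)
  have hu2 : (0:ℝ) < u ^ 2 := by positivity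
  rw [abs_div, abs_of_nonneg hnn, abs_of_nonneg hu2.le, div_le_iff₀ hu2]
  rcases le_or_gt |u * x| 1 with h | h
  · have h1 := Real.abs_exp_sub_one_sub_id_le h
    have h2 : Real.exp (u * x) - 1 - u * x ≤ (u * x) ^ 2 :=
      (abs_of_nonneg hnn) ▸ h1
    nlinarith [Real.exp_pos (2 * x), sq_nonneg x, sq_nonneg u,
      mul_pos hu2 (Real.exp_pos (2 * x))]
  · rcases le_or_gt 0 x with hx | hx
    · -- then u*x > 1
      have hy : 1 < u * x := by
        rcases abs_cases (u * x) with ⟨he, _⟩ | ⟨he, hneg⟩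
        · linarith
        · nlinarith
      have hx1 : 1 < x := by nlinarith
      have hux : u * x ≤ x := by nlinarith
      have he1 : Real.exp (u * x) ≤ Real.exp x := Real.exp_le_exp.2 hux
      have he2 : x ^ 2 ≤ 4 * Real.exp x := sq_le_four_exp' hx
      have he3 : Real.exp x * Real.exp x = Real.exp (2 * x) := by
        rw [← Real.exp_add]; ring_nf
      have h1u : 1 < u ^ 2 * x ^ 2 := by nlinarith
      -- exp(u*x) - 1 - u*x ≤ exp x ≤ exp x * (u²x²) ≤ u² * 4 exp(2x)
      have key : Real.exp (u * x) - 1 - u * x ≤ Real.exp x * (u ^ 2 * x ^ 2) := by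
        nlinarith [Real.exp_pos x]
      calc Real.exp (u * x) - 1 - u * x ≤ Real.exp x * (u ^ 2 * x ^ 2) := key
        _ ≤ (4 * x ^ 2 + 4 * Real.exp (2 * x)) * u ^ 2 := by
            nlinarith [Real.exp_pos x, sq_nonneg x]
    · -- x < 0, u*x < -1
      have hy : u * x < -1 := by
        rcases abs_cases (u * x) with ⟨he, hpos⟩ | ⟨he, _⟩
        · nlinarith
        · linarith
      have he1 : Real.exp (u * x) ≤ 1 := Real.exp_le_one_iff.2 (by nlinarith)
      have h1u : 1 < u ^ 2 * x ^ 2 := by nlinarith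
      have key : Real.exp (u * x) - 1 - u * x ≤ -(u * x) := by linarith
      calc Real.exp (u * x) - 1 - u * x ≤ -(u * x) := key
        _ ≤ u ^ 2 * x ^ 2 := by nlinarith
        _ ≤ (4 * x ^ 2 + 4 * Real.exp (2 * x)) * u ^ 2 := by
            nlinarith [Real.exp_pos (2 * x), sq_nonneg x, sq_nonneg u]

theorem mgf_le_of_sqrt_log_concave
    (μ : Measure ℝ) [IsProbabilityMeasure μ]
    (hint : ∀ t : ℝ, 0 ≤ t → Integrable (fun x => Real.exp (t * x)) μ)
    (hsq : Integrable (fun x : ℝ => x ^ 2) μ)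
    (hconc : ConcaveOn ℝ (Set.Ici 0)
      (fun t => Real.log (∫ x, Real.exp (Real.sqrt t * x) ∂μ)))
    (hmean : ∫ x, x ∂μ = 0) :
    ∀ t : ℝ, 0 ≤ t →
      ∫ x, Real.exp (t * x) ∂μ ≤ Real.exp (t ^ 2 * (∫ x, x ^ 2 ∂μ) / 2) := by
  have hx1 : Integrable (fun x : ℝ => x) μ := by
    refine (hsq.add (integrable_const 1)).mono' measurable_id.aestronglyMeasurable ?_
    filter_upwards with x
    simp only [norm_eq_abs, Pi.add_apply]
    nlinarith [sq_abs x, abs_nonneg x]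
  intro t ht
  rcases eq_or_lt_of_le ht with rfl | ht0
  · simp
  set I2 := ∫ x, x ^ 2 ∂μ with hI2def
  -- positivity of the "mgf"
  have hmgf_pos : ∀ u : ℝ, 0 ≤ u → 0 < ∫ x, Real.exp (u * x) ∂μ := by
    intro u hu
    exact ProbabilityTheory.mgf_pos (X := fun x : ℝ => x) (hint u hu)
  -- the function f
  set f : ℝ → ℝ := fun s => Real.log (∫ x, Real.exp (Real.sqrt s * x) ∂μ) with hf
  have hf0 : f 0 = 0 := by
    simp [hf, Real.sqrt_zero]
  have hfsq : ∀ u : ℝ, 0 ≤ u → f (u ^ 2) = Real.log (∫ x, Real.exp (u * x) ∂μ) := by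
    intro u hu
    simp [hf, Real.sqrt_sq hu]
  -- A u
  set A : ℝ → ℝ := fun u => ∫ x, (Real.exp (u * x) - 1 - u * x) / u ^ 2 ∂μ with hA
  -- computation of u^2 * A u
  have hAcomp : ∀ u : ℝ, 0 < u → u ^ 2 * A u = (∫ x, Real.exp (u * x) ∂μ) - 1 := by
    intro u hu
    have hu2 : (0:ℝ) < u ^ 2 := by positivity
    have hint1 : Integrable (fun x => Real.exp (u * x) - 1) μ :=
      (hint u hu.le).sub (integrable_const 1)
    have hint2 : Integrable (fun x => Real.exp (u * x) - 1 - u * x) μ :=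
      hint1.sub (hx1.const_mul u)
    have h1 : A u = (∫ x, Real.exp (u * x) - 1 - u * x ∂μ) / u ^ 2 := by
      rw [hA]
      simp only
      rw [integral_div]
    have h2 : (∫ x, Real.exp (u * x) - 1 - u * x ∂μ)
        = (∫ x, Real.exp (u * x) ∂μ) - 1 - u * ∫ x, x ∂μ := by
      rw [integral_sub hint1 (hx1.const_mul u), integral_sub (hint u hu.le) (integrable_const 1),
        integral_const_mul, integral_const]
      simp
    rw [h1, h2, hmean]
    field_simp
    ring
  -- log bound
  have hlog : ∀ u : ℝ, 0 < u → Real.log (∫ x, Real.exp (u * x) ∂μ) ≤ u ^ 2 * A u := by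
    intro u hu
    rw [hAcomp u hu]
    exact Real.log_le_sub_one_of_pos (hmgf_pos u hu.le)
  -- concavity step: for 0 < u ≤ t, f (t^2) ≤ (t^2/u^2) * f (u^2)
  have hconcav : ∀ u : ℝ, 0 < u → u ≤ t →
      Real.log (∫ x, Real.exp (t * x) ∂μ) ≤ t ^ 2 * A u := by
    intro u hu hut
    have ht2 : (0:ℝ) < t ^ 2 := by positivity
    have hu2 : (0:ℝ) < u ^ 2 := by positivity
    have hu2t2 : u ^ 2 ≤ t ^ 2 := by nlinarith
    set a : ℝ := u ^ 2 / t ^ 2 with ha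
    have ha0 : 0 ≤ a := by positivity
    have ha1 : a ≤ 1 := by
      rw [ha, div_le_one ht2]; exact hu2t2
    have hcc := hconc.2
    have hcomb := hcc (mem_Ici.2 ht2.le) (mem_Ici.2 (le_refl (0:ℝ)))
      (a := a) (b := 1 - a) ha0 (by linarith) (by ring)
    simp only [smul_eq_mul] at hcomb
    have hpt : a * t ^ 2 + (1 - a) * (0:ℝ) = u ^ 2 := by
      rw [ha]; field_simp; ring
    rw [hpt] at hcomb
    have hcomb' : a * f (t ^ 2) ≤ f (u ^ 2) := by
      simpa [hf0] using hcomb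
    have hftu : f (t ^ 2) ≤ (t ^ 2 / u ^ 2) * f (u ^ 2) := by
      rw [ha] at hcomb'
      have h3 := mul_le_mul_of_nonneg_left hcomb' (le_of_lt (div_pos ht2 hu2))
      calc f (t ^ 2) = t ^ 2 / u ^ 2 * (u ^ 2 / t ^ 2 * f (t ^ 2)) := by
            field_simp
        _ ≤ t ^ 2 / u ^ 2 * f (u ^ 2) := h3
    have := hlog u hu
    rw [← hfsq u hu.le] at this
    calc Real.log (∫ x, Real.exp (t * x) ∂μ) = f (t ^ 2) := (hfsq t ht).symm
      _ ≤ (t ^ 2 / u ^ 2) * f (u ^ 2) := hftu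
      _ ≤ (t ^ 2 / u ^ 2) * (u ^ 2 * A u) := by
          apply mul_le_mul_of_nonneg_left this (by positivity)
      _ = t ^ 2 * A u := by field_simp
  -- the sequence
  set c : ℝ := min t 1 with hc
  have hc0 : 0 < c := lt_min ht0 one_pos
  set u : ℕ → ℝ := fun n => c / (n + 1) with hu
  have hupos : ∀ n, 0 < u n := fun n => by positivity
  have hule1 : ∀ n, u n ≤ 1 := by
    intro n
    rw [hu]
    have h1 : c ≤ 1 := min_le_right _ _
    have h2 : (1:ℝ) ≤ (n:ℝ) + 1 := by
      have := Nat.cast_nonneg (α := ℝ) n; linarith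
    calc c / ((n:ℝ) + 1) ≤ c / 1 := by
          apply div_le_div_of_nonneg_left hc0.le one_pos h2
      _ = c := by ring
      _ ≤ 1 := h1
  have hulet : ∀ n, u n ≤ t := by
    intro n
    rw [hu]
    have h1 : c ≤ t := min_le_left _ _
    have h2 : (1:ℝ) ≤ (n:ℝ) + 1 := by
      have := Nat.cast_nonneg (α := ℝ) n; linarith
    calc c / ((n:ℝ) + 1) ≤ c / 1 := by
          apply div_le_div_of_nonneg_left hc0.le one_pos h2
      _ = c := by ring
      _ ≤ t := h1
  have hutend : Tendsto u atTop (nhds 0) := by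
    have h0 : Tendsto (fun n : ℕ => 1 / ((n:ℝ) + 1)) atTop (nhds 0) :=
      tendsto_one_div_add_atTop_nhds_zero_nat
    have h1 := h0.const_mul c
    have h2 : (fun n : ℕ => c * (1 / ((n:ℝ) + 1))) = u := by
      funext n; rw [hu]; ring
    rw [h2] at h1
    simpa using h1
  -- dominated convergence
  have hAtend : Tendsto (fun n => A (u n)) atTop (nhds (I2 / 2)) := by
    have hI2half : I2 / 2 = ∫ x, x ^ 2 / 2 ∂μ := by
      rw [hI2def, integral_div]
    rw [hA, hI2half]
    apply tendsto_integral_filter_of_dominated_convergence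
      (bound := fun x => 4 * x ^ 2 + 4 * Real.exp (2 * x))
    · filter_upwards with n
      apply Continuous.aestronglyMeasurable
      fun_prop
    · filter_upwards with n
      filter_upwards with x
      simpa only [norm_eq_abs] using F_dom_bound (x := x) (hupos n) (hule1 n)
    · exact (hsq.const_mul 4).add ((hint 2 (by norm_num)).const_mul 4)
    · filter_upwards with x
      -- pointwise limit
      have hb : Tendsto (fun n => |x| ^ 3 * u n) atTop (nhds 0) := by
        simpa using hutend.const_mul (|x| ^ 3)
      have hev : ∀ᶠ n in atTop,
          ‖(Real.exp (u n * x) - 1 - u n * x) / u n ^ 2 - x ^ 2 / 2‖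
            ≤ |x| ^ 3 * u n := by
        have hsmall : ∀ᶠ n in atTop, |u n * x| ≤ 1 := by
          have hten : Tendsto (fun n => |u n * x|) atTop (nhds 0) := by
            simpa using ((hutend.mul_const x).abs)
          exact (hten.eventually_lt_const (by norm_num : (0:ℝ) < 1)).mono
            fun n h => h.le
        filter_upwards [hsmall] with n hn
        have hu2 : (0:ℝ) < u n ^ 2 := by positivity
        have ht2 := exp_taylor2 hn
        have heq : (Real.exp (u n * x) - 1 - u n * x) / u n ^ 2 - x ^ 2 / 2
            = (Real.exp (u n * x) - 1 - u n * x - (u n * x) ^ 2 / 2) / u n ^ 2 := by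
          have hne : u n ≠ 0 := (hupos n).ne'
          field_simp
        rw [norm_eq_abs, heq, abs_div, abs_of_nonneg hu2.le, div_le_iff₀ hu2]
        calc |Real.exp (u n * x) - 1 - u n * x - (u n * x) ^ 2 / 2|
            ≤ |u n * x| ^ 3 := ht2
          _ = u n ^ 3 * |x| ^ 3 := by
              rw [abs_mul, mul_pow, abs_of_nonneg (hupos n).le]
          _ ≤ |x| ^ 3 * u n * u n ^ 2 := by
              nlinarith [hupos n, abs_nonneg x, pow_nonneg (abs_nonneg x) 3,
                sq_nonneg (u n), (hupos n).le, hule1 n]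
      have := squeeze_zero_norm' hev hb
      have h2 : Tendsto (fun n => ((Real.exp (u n * x) - 1 - u n * x) / u n ^ 2 - x ^ 2 / 2)
          + x ^ 2 / 2) atTop (nhds (0 + x ^ 2 / 2)) := this.add tendsto_const_nhds
      simpa using h2
  -- conclude
  have hbound : Real.log (∫ x, Real.exp (t * x) ∂μ) ≤ t ^ 2 * (I2 / 2) := by
    apply ge_of_tendsto (hAtend.const_mul (t ^ 2))
    filter_upwards with n
    exact hconcav (u n) (hupos n) ((hulet n))
  have hfin : Real.log (∫ x, Real.exp (t * x) ∂μ) ≤ t ^ 2 * I2 / 2 := by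
    linarith [hbound]
  calc ∫ x, Real.exp (t * x) ∂μ
      = Real.exp (Real.log (∫ x, Real.exp (t * x) ∂μ)) :=
        (Real.exp_log (hmgf_pos t ht)).symm
    _ ≤ Real.exp (t ^ 2 * I2 / 2) := Real.exp_le_exp.2 hfin
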